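/- Let ν be a Lévy measure on ℝ^d and define the measure ν̃ on ℝ^d ∖ {0} by ν̃(B) = ∫₀^∞ e^{-s} ν({y : s y ∈ B}) ds. Then for every integer m ≥ 0, ∫_{{|y| > 1}} (log |y|)^m ν(dy) < ∞ if and only if ∫_{{|x| > 1}} (log |x|)^m ν̃(dx) < ∞. -/

import Mathlib

open MeasureTheory Real Set ENNReal

lemma aux_pow_add_le (a b : ℝ) (ha : 0 ≤ a) (hb : 0 ≤ b) (m : ℕ) :
    (a + b) ^ m ≤ 2 ^ m * (a ^ m + b ^ m) := by
  calc (a + b) ^ m ≤ (2 * max a b) ^ m := by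
        apply pow_le_pow_left₀ (by positivity)
        rcases le_total a b with h | h
        · rw [max_eq_right h]; linarith
        · rw [max_eq_left h]; linarith
    _ = 2 ^ m * (max a b) ^ m := mul_pow _ _ _
    _ ≤ 2 ^ m * (a ^ m + b ^ m) := by
        apply mul_le_mul_of_nonneg_left _ (by positivity)
        rcases le_total a b with h | h
        · rw [max_eq_right h]; nlinarith [pow_nonneg ha m]
        · rw [max_eq_left h]; nlinarith [pow_nonneg hb m]

lemma aux_Am (m : ℕ) :
    ∫⁻ s in Set.Ioi (0:ℝ), ENNReal.ofReal (Real.exp (-(s/2)) * s ^ m) < ⊤ := by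
  set C : ℝ := (m.factorial : ℝ) * 4 ^ m with hC
  have hC0 : 0 < C := by positivity
  have hpt : ∀ s ∈ Set.Ioi (0:ℝ),
      ENNReal.ofReal (Real.exp (-(s/2)) * s ^ m)
        ≤ ENNReal.ofReal (C * Real.exp (-(1/4) * s)) := by
    intro s hs
    apply ENNReal.ofReal_le_ofReal
    have h1 : s ^ m ≤ C * Real.exp (s/4) := by
      have := Real.pow_div_factorial_le_exp (s/4) (by simp at hs; positivity) m
      have h2 : (s/4) ^ m = s ^ m / 4 ^ m := by rw [div_pow]
      rw [h2, div_div] at this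
      have h3 : (0:ℝ) < (m.factorial : ℝ) * 4 ^ m := by positivity
      calc s ^ m = ((m.factorial : ℝ) * 4 ^ m) * (s ^ m / ((4:ℝ) ^ m * (m.factorial : ℝ))) := by
            field_simp
        _ ≤ C * Real.exp (s/4) := by
            rw [hC]
            apply mul_le_mul_of_nonneg_left _ h3.le
            exact this
    calc Real.exp (-(s/2)) * s ^ m ≤ Real.exp (-(s/2)) * (C * Real.exp (s/4)) := by
          apply mul_le_mul_of_nonneg_left h1 (Real.exp_nonneg _)
      _ = C * (Real.exp (-(s/2)) * Real.exp (s/4)) := by ring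
      _ = C * Real.exp (-(1/4) * s) := by rw [← Real.exp_add]; ring_nf
  have hint : IntegrableOn (fun s : ℝ => C * Real.exp (-(1/4) * s)) (Set.Ioi 0) := by
    exact (exp_neg_integrableOn_Ioi 0 (by norm_num : (0:ℝ) < 1/4)).const_mul C
  calc ∫⁻ s in Set.Ioi (0:ℝ), ENNReal.ofReal (Real.exp (-(s/2)) * s ^ m)
      ≤ ∫⁻ s in Set.Ioi (0:ℝ), ENNReal.ofReal (C * Real.exp (-(1/4) * s)) := by
        apply setLIntegral_mono _ hpt
        exact ENNReal.measurable_ofReal.comp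
          ((continuous_const.mul ((Real.continuous_exp.comp (continuous_const.mul continuous_id)))).measurable)
    _ ≤ ∫⁻ s in Set.Ioi (0:ℝ), ‖C * Real.exp (-(1/4) * s)‖₊ := by
        apply lintegral_mono
        intro s
        exact Real.ofReal_le_enorm _
    _ < ⊤ := hint.2

lemma aux_low (d m : ℕ) (y : EuclideanSpace ℝ (Fin d)) (hy : 1 < ‖y‖) :
    ENNReal.ofReal (Real.exp (-2)) * ENNReal.ofReal (Real.log ‖y‖ ^ m) ≤
      ∫⁻ s in Set.Ioi (0:ℝ), ENNReal.ofReal (Real.exp (-s)) *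
        ({x : EuclideanSpace ℝ (Fin d) | 1 < ‖x‖}.indicator
          (fun x => ENNReal.ofReal (Real.log ‖x‖ ^ m))) (s • y) := by
  set U : Set (EuclideanSpace ℝ (Fin d)) := {x | 1 < ‖x‖} with hUdef
  have hy0 : (0:ℝ) < ‖y‖ := lt_trans one_pos hy
  have hmeas : Measurable fun s : ℝ => ENNReal.ofReal (Real.exp (-s)) *
      (U.indicator (fun x => ENNReal.ofReal (Real.log ‖x‖ ^ m))) (s • y) := by
    refine Measurable.mul ?_ ?_
    · exact ENNReal.measurable_ofReal.comp (Real.continuous_exp.comp continuous_neg).measurable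
    · have hind : Measurable (U.indicator
          (fun x : EuclideanSpace ℝ (Fin d) => ENNReal.ofReal (Real.log ‖x‖ ^ m))) :=
        (ENNReal.measurable_ofReal.comp
          ((Real.measurable_log.comp measurable_norm).pow_const m)).indicator
          (isOpen_lt continuous_const continuous_norm).measurableSet
      have hsm : Measurable fun s : ℝ => s • y := (continuous_id.smul continuous_const).measurable
      exact hind.comp hsm
  calc ENNReal.ofReal (Real.exp (-2)) * ENNReal.ofReal (Real.log ‖y‖ ^ m)
      = ∫⁻ _ in Set.Ioc (1:ℝ) 2,
          ENNReal.ofReal (Real.exp (-2)) * ENNReal.ofReal (Real.log ‖y‖ ^ m) := by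
        rw [setLIntegral_const, Real.volume_Ioc]
        norm_num
    _ ≤ ∫⁻ s in Set.Ioc (1:ℝ) 2, ENNReal.ofReal (Real.exp (-s)) *
          (U.indicator (fun x => ENNReal.ofReal (Real.log ‖x‖ ^ m))) (s • y) := by
        refine setLIntegral_mono hmeas ?_
        intro s hs
        obtain ⟨hs1, hs2⟩ := hs
        have hs0 : (0:ℝ) < s := lt_trans one_pos hs1
        have hnorm : ‖s • y‖ = s * ‖y‖ := by
          rw [norm_smul, Real.norm_eq_abs, abs_of_pos hs0]
        have hmem : s • y ∈ U := by
          simp only [hUdef, Set.mem_setOf_eq, hnorm]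
          nlinarith
        rw [Set.indicator_of_mem hmem]
        refine mul_le_mul' (ENNReal.ofReal_le_ofReal ?_) (ENNReal.ofReal_le_ofReal ?_)
        · exact Real.exp_le_exp.mpr (by linarith)
        · refine pow_le_pow_left₀ (Real.log_nonneg hy.le) ?_ m
          rw [hnorm]
          exact Real.log_le_log hy0 (le_mul_of_one_le_left (norm_nonneg y) hs1.le)
    _ ≤ _ := lintegral_mono_set (fun x hx => lt_trans one_pos hx.1)

lemma aux_up1 (d m : ℕ) (y : EuclideanSpace ℝ (Fin d)) (hy : ‖y‖ ≤ 1) :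
    (∫⁻ s in Set.Ioi (0:ℝ), ENNReal.ofReal (Real.exp (-s)) *
        ({x : EuclideanSpace ℝ (Fin d) | 1 < ‖x‖}.indicator
          (fun x => ENNReal.ofReal (Real.log ‖x‖ ^ m))) (s • y))
      ≤ ENNReal.ofReal 8 * (∫⁻ s in Set.Ioi (0:ℝ), ENNReal.ofReal (Real.exp (-(s/2)) * s ^ m))
          * ENNReal.ofReal (‖y‖^2) := by
  set U : Set (EuclideanSpace ℝ (Fin d)) := {x | 1 < ‖x‖} with hUdef
  rcases eq_or_lt_of_le (norm_nonneg y) with hy0 | hy0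
  · have hzero : ∀ s : ℝ, (U.indicator (fun x => ENNReal.ofReal (Real.log ‖x‖ ^ m))) (s • y) = 0 := by
      intro s
      apply Set.indicator_of_notMem
      simp only [hUdef, Set.mem_setOf_eq, not_lt, norm_smul, ← hy0, mul_zero]
      norm_num
    simp only [hzero, mul_zero, lintegral_const, zero_mul]
    exact zero_le
  · set a : ℝ := 1/‖y‖ with hadef
    have ha1 : 1 ≤ a := by
      rw [hadef, le_div_iff₀ hy0]
      simpa using hy
    have ha0 : 0 < a := lt_of_lt_of_le one_pos ha1
    have hprod : a * ‖y‖ = 1 := by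
      rw [hadef]; field_simp
    have hpt : ∀ s ∈ Set.Ioi (0:ℝ), ENNReal.ofReal (Real.exp (-s)) *
        (U.indicator (fun x => ENNReal.ofReal (Real.log ‖x‖ ^ m))) (s • y)
          ≤ ENNReal.ofReal (Real.exp (-(a/2))) * ENNReal.ofReal (Real.exp (-(s/2)) * s ^ m) := by
      intro s hs
      have hs0 : (0:ℝ) < s := hs
      have hnorm : ‖s • y‖ = s * ‖y‖ := by
        rw [norm_smul, Real.norm_eq_abs, abs_of_pos hs0]
      by_cases hmem : s • y ∈ U
      · have h1 : 1 < s * ‖y‖ := by simpa only [hUdef, Set.mem_setOf_eq, hnorm] using hmem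
        have hsa : a < s := by
          rw [hadef, div_lt_iff₀ hy0]
          linarith
        rw [Set.indicator_of_mem hmem]
        rw [← ENNReal.ofReal_mul (Real.exp_nonneg _), ← ENNReal.ofReal_mul (Real.exp_nonneg _)]
        apply ENNReal.ofReal_le_ofReal
        have hlog1 : 0 ≤ Real.log ‖s • y‖ := Real.log_nonneg (by rw [hnorm]; linarith)
        have hlog2 : Real.log ‖s • y‖ ≤ s := by
          rw [hnorm]
          calc Real.log (s * ‖y‖) ≤ Real.log s := by
                apply Real.log_le_log (by linarith)
                exact mul_le_of_le_one_right hs0.le hy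
            _ ≤ s := by nlinarith [Real.log_le_sub_one_of_pos hs0]
        have hpow : Real.log ‖s • y‖ ^ m ≤ s ^ m := pow_le_pow_left₀ hlog1 hlog2 m
        have hexp : Real.exp (-s) ≤ Real.exp (-(a/2)) * Real.exp (-(s/2)) := by
          rw [← Real.exp_add]
          exact Real.exp_le_exp.mpr (by linarith)
        calc Real.exp (-s) * Real.log ‖s • y‖ ^ m
            ≤ (Real.exp (-(a/2)) * Real.exp (-(s/2))) * s ^ m := by
              apply mul_le_mul hexp hpow (by positivity) (by positivity)
          _ = Real.exp (-(a/2)) * (Real.exp (-(s/2)) * s ^ m) := by ring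
      · rw [Set.indicator_of_notMem hmem]
        simp
    have hbound : (∫⁻ s in Set.Ioi (0:ℝ), ENNReal.ofReal (Real.exp (-s)) *
        (U.indicator (fun x => ENNReal.ofReal (Real.log ‖x‖ ^ m))) (s • y))
          ≤ ENNReal.ofReal (Real.exp (-(a/2))) *
            ∫⁻ s in Set.Ioi (0:ℝ), ENNReal.ofReal (Real.exp (-(s/2)) * s ^ m) := by
      rw [← lintegral_const_mul' _ _ ENNReal.ofReal_ne_top]
      refine setLIntegral_mono ?_ hpt
      exact measurable_const.mul (ENNReal.measurable_ofReal.comp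
        (((Real.continuous_exp.comp (continuous_neg.comp (continuous_id.div_const 2))).measurable).mul
          (measurable_id.pow_const m)))
    refine hbound.trans ?_
    have hexp2 : Real.exp (-(a/2)) ≤ 8 * ‖y‖^2 := by
      have hq := Real.quadratic_le_exp_of_nonneg (x := a/2) (by positivity)
      have h8 : a^2/8 ≤ Real.exp (a/2) := by nlinarith
      have hmul : Real.exp (-(a/2)) * Real.exp (a/2) = 1 := by
        rw [← Real.exp_add]; simp
      nlinarith [Real.exp_pos (-(a/2)), Real.exp_pos (a/2),
        mul_le_mul_of_nonneg_left h8 (Real.exp_pos (-(a/2))).le, sq_nonneg (a*‖y‖)]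
    calc ENNReal.ofReal (Real.exp (-(a/2))) *
          ∫⁻ s in Set.Ioi (0:ℝ), ENNReal.ofReal (Real.exp (-(s/2)) * s ^ m)
        ≤ ENNReal.ofReal (8 * ‖y‖^2) *
          ∫⁻ s in Set.Ioi (0:ℝ), ENNReal.ofReal (Real.exp (-(s/2)) * s ^ m) :=
          mul_le_mul_left (ENNReal.ofReal_le_ofReal hexp2) _
      _ = ENNReal.ofReal 8 * (∫⁻ s in Set.Ioi (0:ℝ), ENNReal.ofReal (Real.exp (-(s/2)) * s ^ m))
          * ENNReal.ofReal (‖y‖^2) := by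
          rw [ENNReal.ofReal_mul (by norm_num)]
          ring

lemma aux_up2 (d m : ℕ) (y : EuclideanSpace ℝ (Fin d)) (hy : 1 < ‖y‖) :
    (∫⁻ s in Set.Ioi (0:ℝ), ENNReal.ofReal (Real.exp (-s)) *
        ({x : EuclideanSpace ℝ (Fin d) | 1 < ‖x‖}.indicator
          (fun x => ENNReal.ofReal (Real.log ‖x‖ ^ m))) (s • y))
      ≤ ENNReal.ofReal (2^m) * (∫⁻ s in Set.Ioi (0:ℝ), ENNReal.ofReal (Real.exp (-(s/2)) * s ^ m))
        + (ENNReal.ofReal (2^m) * ∫⁻ s in Set.Ioi (0:ℝ), ENNReal.ofReal (Real.exp (-(s/2))))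
            * ENNReal.ofReal (Real.log ‖y‖ ^ m) := by
  set U : Set (EuclideanSpace ℝ (Fin d)) := {x | 1 < ‖x‖} with hUdef
  have hy0 : (0:ℝ) < ‖y‖ := lt_trans one_pos hy
  set L : ℝ := Real.log ‖y‖ with hLdef
  have hL0 : 0 ≤ L := Real.log_nonneg hy.le
  have hpt : ∀ s ∈ Set.Ioi (0:ℝ), ENNReal.ofReal (Real.exp (-s)) *
      (U.indicator (fun x => ENNReal.ofReal (Real.log ‖x‖ ^ m))) (s • y)
        ≤ ENNReal.ofReal (2^m) * ENNReal.ofReal (Real.exp (-(s/2)) * s ^ m)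
          + (ENNReal.ofReal (2^m) * ENNReal.ofReal (Real.exp (-(s/2)))) * ENNReal.ofReal (L ^ m) := by
    intro s hs
    have hs0 : (0:ℝ) < s := hs
    have hnorm : ‖s • y‖ = s * ‖y‖ := by
      rw [norm_smul, Real.norm_eq_abs, abs_of_pos hs0]
    by_cases hmem : s • y ∈ U
    · have h1 : 1 < s * ‖y‖ := by simpa only [hUdef, Set.mem_setOf_eq, hnorm] using hmem
      rw [Set.indicator_of_mem hmem]
      have hlogpos : 0 ≤ Real.log ‖s • y‖ := Real.log_nonneg (by rw [hnorm]; linarith)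
      have hlog : Real.log ‖s • y‖ ≤ s + L := by
        rw [hnorm, Real.log_mul (ne_of_gt hs0) (ne_of_gt hy0), hLdef]
        have := Real.log_le_sub_one_of_pos hs0
        linarith
      have hpow : Real.log ‖s • y‖ ^ m ≤ 2^m * (s^m + L^m) :=
        (pow_le_pow_left₀ hlogpos hlog m).trans (aux_pow_add_le s L hs0.le hL0 m)
      have hexp : Real.exp (-s) ≤ Real.exp (-(s/2)) := Real.exp_le_exp.mpr (by linarith)
      have hreal : Real.exp (-s) * Real.log ‖s • y‖ ^ m
          ≤ 2^m * (Real.exp (-(s/2)) * s^m) + (2^m * Real.exp (-(s/2))) * L^m := by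
        calc Real.exp (-s) * Real.log ‖s • y‖ ^ m
            ≤ Real.exp (-s) * (2^m * (s^m + L^m)) :=
              mul_le_mul_of_nonneg_left hpow (Real.exp_nonneg _)
          _ ≤ Real.exp (-(s/2)) * (2^m * (s^m + L^m)) :=
              mul_le_mul_of_nonneg_right hexp (by positivity)
          _ = 2^m * (Real.exp (-(s/2)) * s^m) + (2^m * Real.exp (-(s/2))) * L^m := by ring
      calc ENNReal.ofReal (Real.exp (-s)) * ENNReal.ofReal (Real.log ‖s • y‖ ^ m)
          = ENNReal.ofReal (Real.exp (-s) * Real.log ‖s • y‖ ^ m) :=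
            (ENNReal.ofReal_mul (Real.exp_nonneg _)).symm
        _ ≤ ENNReal.ofReal (2^m * (Real.exp (-(s/2)) * s^m) + (2^m * Real.exp (-(s/2))) * L^m) :=
            ENNReal.ofReal_le_ofReal hreal
        _ = ENNReal.ofReal (2^m) * ENNReal.ofReal (Real.exp (-(s/2)) * s ^ m)
            + (ENNReal.ofReal (2^m) * ENNReal.ofReal (Real.exp (-(s/2)))) * ENNReal.ofReal (L ^ m) := by
            rw [ENNReal.ofReal_add (by positivity) (by positivity),
              ENNReal.ofReal_mul (by positivity), ENNReal.ofReal_mul (by positivity),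
              ENNReal.ofReal_mul (by positivity), ENNReal.ofReal_mul (by positivity)]
    · rw [Set.indicator_of_notMem hmem]
      simp
  calc (∫⁻ s in Set.Ioi (0:ℝ), ENNReal.ofReal (Real.exp (-s)) *
        (U.indicator (fun x => ENNReal.ofReal (Real.log ‖x‖ ^ m))) (s • y))
      ≤ ∫⁻ s in Set.Ioi (0:ℝ),
          (ENNReal.ofReal (2^m) * ENNReal.ofReal (Real.exp (-(s/2)) * s ^ m)
            + (ENNReal.ofReal (2^m) * ENNReal.ofReal (Real.exp (-(s/2)))) * ENNReal.ofReal (L ^ m)) := by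
        refine setLIntegral_mono ?_ hpt
        have hm1 : Measurable fun s : ℝ => ENNReal.ofReal (Real.exp (-(s/2)) * s ^ m) :=
          ENNReal.measurable_ofReal.comp
            (((Real.continuous_exp.comp (continuous_neg.comp (continuous_id.div_const 2))).measurable).mul
              (measurable_id.pow_const m))
        have hm2 : Measurable fun s : ℝ => ENNReal.ofReal (Real.exp (-(s/2))) :=
          ENNReal.measurable_ofReal.comp
            (Real.continuous_exp.comp (continuous_neg.comp (continuous_id.div_const 2))).measurable
        exact (measurable_const.mul hm1).add ((measurable_const.mul hm2).mul measurable_const)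
    _ = ENNReal.ofReal (2^m) * (∫⁻ s in Set.Ioi (0:ℝ), ENNReal.ofReal (Real.exp (-(s/2)) * s ^ m))
        + (ENNReal.ofReal (2^m) * ∫⁻ s in Set.Ioi (0:ℝ), ENNReal.ofReal (Real.exp (-(s/2))))
            * ENNReal.ofReal (L ^ m) := by
        have hm1 : Measurable fun s : ℝ =>
            ENNReal.ofReal (2^m) * ENNReal.ofReal (Real.exp (-(s/2)) * s ^ m) := by
          exact measurable_const.mul (ENNReal.measurable_ofReal.comp
            (((Real.continuous_exp.comp (continuous_neg.comp (continuous_id.div_const 2))).measurable).mul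
              (measurable_id.pow_const m)))
        rw [lintegral_add_left hm1]
        rw [lintegral_const_mul' _ _ ENNReal.ofReal_ne_top,
          lintegral_mul_const' _ _ ENNReal.ofReal_ne_top,
          lintegral_const_mul' _ _ ENNReal.ofReal_ne_top]

/-- If `ν` is a Lévy measure and `ν̃(B) = ∫₀^∞ e^{-s} ν({y : sy ∈ B}) ds` on `ℝ^d ∖ {0}`,
then for every `m ≥ 0`, `∫_{|y|>1} (log|y|)^m ν(dy) < ∞` iff
`∫_{|x|>1} (log|x|)^m ν̃(dx) < ∞`. -/
theorem stmt_11 (d : ℕ) (hd : 1 ≤ d)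
    (ν : Measure (EuclideanSpace ℝ (Fin d)))
    (hν0 : ν {0} = 0)
    (hνfin : ∫⁻ x, ENNReal.ofReal (min (‖x‖ ^ 2) 1) ∂ν < ⊤)
    (νt : Measure (EuclideanSpace ℝ (Fin d)))
    (hνt : ∀ B : Set (EuclideanSpace ℝ (Fin d)), MeasurableSet B → B ⊆ {0}ᶜ →
      νt B = ∫⁻ s in Set.Ioi (0 : ℝ), ENNReal.ofReal (Real.exp (-s)) * ν {y | s • y ∈ B})
    (m : ℕ) :
    ∫⁻ y in {y : EuclideanSpace ℝ (Fin d) | 1 < ‖y‖},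
        ENNReal.ofReal (Real.log ‖y‖ ^ m) ∂ν < ⊤ ↔
      ∫⁻ x in {x : EuclideanSpace ℝ (Fin d) | 1 < ‖x‖},
        ENNReal.ofReal (Real.log ‖x‖ ^ m) ∂νt < ⊤ := by
  -- basic finiteness on shells
  have hfin1 : ∀ ε : ℝ, 0 < ε → ε ≤ 1 → ν {y : EuclideanSpace ℝ (Fin d) | ε < ‖y‖} < ⊤ := by
    intro ε h1 h2
    have hmono : ENNReal.ofReal (ε^2) * ν {y : EuclideanSpace ℝ (Fin d) | ε < ‖y‖}
        ≤ ∫⁻ x, ENNReal.ofReal (min (‖x‖^2) 1) ∂ν := by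
      rw [← setLIntegral_const {y : EuclideanSpace ℝ (Fin d) | ε < ‖y‖} (ENNReal.ofReal (ε^2))]
      refine le_trans (setLIntegral_mono ?_ ?_) (setLIntegral_le_lintegral _ _)
      · exact ENNReal.measurable_ofReal.comp (((measurable_norm.pow_const 2).min measurable_const))
      · intro x hx
        apply ENNReal.ofReal_le_ofReal
        have hx' : ε < ‖x‖ := hx
        refine le_min (by nlinarith) (by nlinarith)
    exact ENNReal.lt_top_of_mul_ne_top_right (hmono.trans_lt hνfin).ne
      (by simp only [ne_eq, ENNReal.ofReal_eq_zero, not_le]; positivity)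
  haveI hsig : SigmaFinite ν := by
    refine ⟨⟨⟨fun n => {y | (1:ℝ)/(n+1) < ‖y‖} ∪ {0}, fun _ => trivial, ?_, ?_⟩⟩⟩
    · intro n
      have h1 : (0:ℝ) < 1/(n+1) := by positivity
      have h2 : (1:ℝ)/(n+1) ≤ 1 := by
        rw [div_le_one (by positivity)]
        exact le_add_of_nonneg_left (Nat.cast_nonneg n)
      calc ν ({y | (1:ℝ)/(n+1) < ‖y‖} ∪ {0}) ≤ ν {y | (1:ℝ)/(n+1) < ‖y‖} + ν {0} :=
            measure_union_le _ _
        _ = ν {y | (1:ℝ)/(n+1) < ‖y‖} := by rw [hν0, add_zero]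
        _ < ⊤ := hfin1 _ h1 h2
    · ext y
      simp only [Set.mem_iUnion, Set.mem_union, Set.mem_setOf_eq, Set.mem_singleton_iff,
        Set.mem_univ, iff_true]
      by_cases hy : y = 0
      · exact ⟨0, Or.inr hy⟩
      · have hy' : 0 < ‖y‖ := norm_pos_iff.mpr hy
        obtain ⟨n, hn⟩ := exists_nat_one_div_lt hy'
        exact ⟨n, Or.inl hn⟩
  -- notation
  set E := EuclideanSpace ℝ (Fin d)
  set U : Set E := {x | 1 < ‖x‖} with hUdef
  have hU : MeasurableSet U := (isOpen_lt continuous_const continuous_norm).measurableSet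
  set g : E → ℝ≥0∞ := fun x => ENNReal.ofReal (Real.log ‖x‖ ^ m) with hgdef
  have hgm : Measurable g :=
    ENNReal.measurable_ofReal.comp ((Real.measurable_log.comp measurable_norm).pow_const m)
  set f : E → ℝ≥0∞ := U.indicator g with hfdef
  have hfm : Measurable f := hgm.indicator hU
  set w : ℝ → ℝ≥0∞ := fun s => ENNReal.ofReal (Real.exp (-s)) with hwdef
  have hwm : Measurable w :=
    ENNReal.measurable_ofReal.comp (Real.continuous_exp.comp continuous_neg).measurable
  set ρ : Measure ℝ := (volume.restrict (Set.Ioi 0)).withDensity w with hρdef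
  set κ : ℝ → Measure E := fun s => ν.map (fun y => s • y) with hκdef
  have hsmul : Measurable (fun p : ℝ × E => p.1 • p.2) := continuous_smul.measurable
  have hsmul1 : ∀ s : ℝ, Measurable (fun y : E => s • y) :=
    fun s => (continuous_const_smul s).measurable
  have hκm : Measurable κ := by
    apply Measure.measurable_of_measurable_coe
    intro B hB
    have heq : (fun s => κ s B)
        = fun s => ν (Prod.mk s ⁻¹' ((fun p : ℝ × E => p.1 • p.2) ⁻¹' B)) := by
      funext s
      rw [hκdef]
      rw [Measure.map_apply (hsmul1 s) hB]
      rfl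
    rw [heq]
    exact measurable_measure_prodMk_left (hsmul hB)
  set μ : Measure E := ρ.bind κ with hμdef
  have hres : νt.restrict U = μ.restrict U := by
    ext B hB
    rw [Measure.restrict_apply hB, Measure.restrict_apply hB]
    have hBU : MeasurableSet (B ∩ U) := hB.inter hU
    have hg1 : Measurable fun a : ℝ => κ a (B ∩ U) := by
      exact (Measure.measurable_coe hBU).comp hκm
    rw [hνt (B ∩ U) hBU (fun x hx => by
      simp only [Set.mem_compl_iff, Set.mem_singleton_iff]
      intro h0
      have h1x : (1:ℝ) < ‖x‖ := hx.2
      rw [h0, norm_zero] at h1x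
      linarith)]
    rw [hμdef, Measure.bind_apply hBU hκm.aemeasurable, hρdef,
      lintegral_withDensity_eq_lintegral_mul _ hwm hg1]
    apply lintegral_congr
    intro s
    simp only [Pi.mul_apply]
    congr 1
    rw [hκdef, Measure.map_apply (hsmul1 s) hBU]
    rfl
  have key1 : ∫⁻ x in U, g x ∂νt = ∫⁻ x, f x ∂μ := by
    rw [hres, hfdef, lintegral_indicator hU]
  have hFm : Measurable fun s : ℝ => ∫⁻ y, f (s • y) ∂ν := by
    apply Measurable.lintegral_prod_right (f := fun (s : ℝ) (y : E) => f (s • y))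
    exact hfm.comp hsmul
  have key2 : ∫⁻ x, f x ∂μ = ∫⁻ s in Set.Ioi (0:ℝ), w s * ∫⁻ y, f (s • y) ∂ν := by
    rw [hμdef, Measure.lintegral_bind hκm.aemeasurable hfm.aemeasurable]
    rw [lintegral_congr (fun a : ℝ => lintegral_map hfm (hsmul1 a))]
    rw [hρdef, lintegral_withDensity_eq_lintegral_mul _ hwm hFm]
    rfl
  have key3 : ∫⁻ s in Set.Ioi (0:ℝ), w s * ∫⁻ y, f (s • y) ∂ν
      = ∫⁻ y, (∫⁻ s in Set.Ioi (0:ℝ), w s * f (s • y)) ∂ν := by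
    have h1 : ∫⁻ s in Set.Ioi (0:ℝ), w s * ∫⁻ y, f (s • y) ∂ν
        = ∫⁻ s in Set.Ioi (0:ℝ), (∫⁻ y, w s * f (s • y) ∂ν) :=
      lintegral_congr fun s => (lintegral_const_mul' (w s) _ ENNReal.ofReal_ne_top).symm
    rw [h1]
    have hmeas : AEMeasurable (Function.uncurry fun (s : ℝ) (y : E) => w s * f (s • y))
        ((volume.restrict (Set.Ioi 0)).prod ν) := by
      exact ((hwm.comp measurable_fst).mul (hfm.comp hsmul)).aemeasurable
    exact lintegral_lintegral_swap hmeas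
  set h : E → ℝ≥0∞ := fun y => ∫⁻ s in Set.Ioi (0:ℝ), w s * f (s • y) with hhdef
  have keyJ : ∫⁻ x in U, g x ∂νt = ∫⁻ y, h y ∂ν := by
    rw [key1, key2, key3]
  have hhm : Measurable h := by
    apply Measurable.lintegral_prod_right (f := fun (y : E) (s : ℝ) => w s * f (s • y))
      (ν := volume.restrict (Set.Ioi 0))
    exact (hwm.comp measurable_snd).mul
      (hfm.comp ((continuous_snd.smul continuous_fst).measurable))
  -- constants
  set Am : ℝ≥0∞ := ∫⁻ s in Set.Ioi (0:ℝ), ENNReal.ofReal (Real.exp (-(s/2)) * s ^ m) with hAmdef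
  set A0 : ℝ≥0∞ := ∫⁻ s in Set.Ioi (0:ℝ), ENNReal.ofReal (Real.exp (-(s/2))) with hA0def
  have hAm : Am < ⊤ := aux_Am m
  have hA0 : A0 < ⊤ := by
    have heq : A0 = ∫⁻ s in Set.Ioi (0:ℝ), ENNReal.ofReal (Real.exp (-(s/2)) * s ^ 0) := by
      rw [hA0def]
      simp
    rw [heq]
    exact aux_Am 0
  have hνU : ν U < ⊤ := hfin1 1 one_pos le_rfl
  have hsq : ∫⁻ y in Uᶜ, ENNReal.ofReal (‖y‖^2) ∂ν < ⊤ := by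
    refine lt_of_le_of_lt ?_ hνfin
    refine le_trans (setLIntegral_mono ?_ ?_) (setLIntegral_le_lintegral _ _)
    · exact ENNReal.measurable_ofReal.comp (((measurable_norm.pow_const 2).min measurable_const))
    · intro x hx
      apply ENNReal.ofReal_le_ofReal
      have hx' : ¬ (1 < ‖x‖) := hx
      have : ‖x‖ ≤ 1 := not_lt.mp hx'
      refine le_min le_rfl (by nlinarith [norm_nonneg x])
  constructor
  · intro hI
    rw [keyJ]
    rw [← lintegral_add_compl h hU]
    refine ENNReal.add_lt_top.mpr ⟨?_, ?_⟩
    · -- on U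
      have hle : ∫⁻ y in U, h y ∂ν
          ≤ ∫⁻ y in U, (ENNReal.ofReal (2^m) * Am + (ENNReal.ofReal (2^m) * A0) * g y) ∂ν := by
        refine setLIntegral_mono (measurable_const.add (measurable_const.mul hgm)) ?_
        intro y hy
        exact aux_up2 d m y hy
      refine lt_of_le_of_lt hle ?_
      rw [lintegral_add_left measurable_const, setLIntegral_const,
        lintegral_const_mul' _ _ (ENNReal.mul_ne_top ENNReal.ofReal_ne_top hA0.ne)]
      refine ENNReal.add_lt_top.mpr ⟨?_, ?_⟩
      · exact ENNReal.mul_lt_top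
          (ENNReal.mul_lt_top ENNReal.ofReal_lt_top hAm) hνU
      · exact ENNReal.mul_lt_top
          (ENNReal.mul_lt_top ENNReal.ofReal_lt_top hA0) hI
    · -- on Uᶜ
      have hle : ∫⁻ y in Uᶜ, h y ∂ν
          ≤ ∫⁻ y in Uᶜ, (ENNReal.ofReal 8 * Am * ENNReal.ofReal (‖y‖^2)) ∂ν := by
        refine setLIntegral_mono (measurable_const.mul
          (ENNReal.measurable_ofReal.comp (measurable_norm.pow_const 2))) ?_
        intro y hy
        exact aux_up1 d m y (not_lt.mp hy)
      refine lt_of_le_of_lt hle ?_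
      rw [lintegral_const_mul' _ _ (ENNReal.mul_ne_top ENNReal.ofReal_ne_top hAm.ne)]
      exact ENNReal.mul_lt_top
        (ENNReal.mul_lt_top ENNReal.ofReal_lt_top hAm) hsq
  · intro hJ
    rw [keyJ] at hJ
    have hlow2 : ENNReal.ofReal (Real.exp (-2)) * ∫⁻ y in U, g y ∂ν ≤ ∫⁻ y, h y ∂ν := by
      rw [← lintegral_const_mul' _ _ ENNReal.ofReal_ne_top]
      refine le_trans (setLIntegral_mono hhm ?_) (setLIntegral_le_lintegral _ _)
      intro y hy
      exact aux_low d m y hy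
    exact ENNReal.lt_top_of_mul_ne_top_right ((hlow2.trans_lt hJ).ne)
      (by simp only [ne_eq, ENNReal.ofReal_eq_zero, not_le]; exact Real.exp_pos _)
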